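/- Let G = (V, E) be a multigraph and let F ⊆ E be a set of edges such that the graph (V, E∖F) has exactly k connected components. Then the number of distinct cuts of G whose edge sets are entirely contained in F is at most 2^{k−1} − 1. Consequently, if the edge sets of u distinct cuts of G are all contained in F, then (V, E∖F) has at least ⌈log₂(u+1) + 1⌉ connected components. -/

import Mathlib

open scoped Classical

/-- A multigraph on vertex type `V` is given by an edge-index type `E` together with a map
`ends : E → Sym2 V` assigning to each edge its (unordered) pair of endpoints; the hypothesis
`∀ e, ¬ (ends e).IsDiag` says that the two endpoints of every edge are distinct.
`survGraph ends F` is the simple graph on `V` whose adjacencies are given by the edges of the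
multigraph that survive when the edges in `F` fail. -/
def survGraph {V E : Type} (ends : E → Sym2 V) (F : Finset E) : SimpleGraph V :=
  SimpleGraph.fromRel (fun x y => ∃ e, e ∉ F ∧ ends e = s(x, y))

/-- The number of connected components of the graph surviving after the edges in `F` fail. -/
noncomputable def numComponents {V E : Type} (ends : E → Sym2 V) (F : Finset E) : ℕ :=
  Nat.card (survGraph ends F).ConnectedComponent

/-- Edge `e` crosses the 2-way cut determined by the vertex set `A` (one endpoint in `A`,
one endpoint outside `A`). -/
def crosses {V E : Type} (ends : E → Sym2 V) (A : Finset V) (e : E) : Prop :=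
  (∃ x ∈ ends e, x ∈ A) ∧ (∃ x ∈ ends e, x ∉ A)

/-- The edge set of the 2-way cut determined by the vertex set `A`. -/
noncomputable def cutEdges {V E : Type} [Fintype E] (ends : E → Sym2 V) (A : Finset V) :
    Finset E :=
  Finset.univ.filter (crosses ends A)

/-- The value of the 2-way cut determined by the vertex set `A`. -/
noncomputable def cutValue {V E : Type} [Fintype E] (ends : E → Sym2 V) (A : Finset V) : ℕ :=
  (cutEdges ends A).card

/-- When each edge fails independently with probability `p`, this is the probability that the
(random) set of failed edges is a member of `S`. -/
noncomputable def failurePr {E : Type} [Fintype E] (p : ℝ) (S : Finset (Finset E)) : ℝ :=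
  ∑ F ∈ S, p ^ F.card * (1 - p) ^ (Fintype.card E - F.card)

/-- Let `G = (V, E)` be a multigraph (with `V` nonempty) and `F ⊆ E` a set of
edges such that `(V, E ∖ F)` has exactly `k` connected components.  Then the number of distinct
cuts of `G` whose edge sets are contained in `F` is at most `2^(k-1) - 1`; consequently, if the
edge sets of `u` distinct cuts of `G` are all contained in `F`, then `(V, E ∖ F)` has at least
`⌈log₂(u+1) + 1⌉` connected components. -/
lemma mem_iff_of_reachable {V E : Type} [Fintype E] (ends : E → Sym2 V) (F : Finset E)
    (A : Finset V) (hA : cutEdges ends A ⊆ F) {x y : V}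
    (h : (survGraph ends F).Reachable x y) : x ∈ A ↔ y ∈ A := by
  have key : ∀ a b : V, (survGraph ends F).Adj a b → a ∈ A → b ∈ A := by
    intro a b hab haA
    by_contra hbA
    rw [survGraph, SimpleGraph.fromRel_adj] at hab
    obtain ⟨hne, h | h⟩ := hab <;> obtain ⟨e, heF, he⟩ := h <;>
      refine heF (hA (Finset.mem_filter.mpr ⟨Finset.mem_univ _, ?_, ?_⟩))
    · exact ⟨a, by rw [he]; simp, haA⟩
    · exact ⟨b, by rw [he]; simp, hbA⟩
    · exact ⟨a, by rw [he]; simp, haA⟩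
    · exact ⟨b, by rw [he]; simp, hbA⟩
  obtain ⟨w⟩ := h
  induction w with
  | nil => rfl
  | cons hadj _ ih =>
    exact Iff.trans ⟨key _ _ hadj, key _ _ hadj.symm⟩ ih

lemma crosses_compl {V E : Type} [Fintype V] [DecidableEq V] (ends : E → Sym2 V)
    (A : Finset V) (e : E) : crosses ends Aᶜ e ↔ crosses ends A e := by
  unfold crosses
  simp only [Finset.mem_compl]
  constructor
  · rintro ⟨⟨x, hx, hxA⟩, ⟨y, hy, hyA⟩⟩
    exact ⟨⟨y, hy, not_not.mp hyA⟩, ⟨x, hx, hxA⟩⟩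
  · rintro ⟨⟨x, hx, hxA⟩, ⟨y, hy, hyA⟩⟩
    exact ⟨⟨y, hy, hyA⟩, ⟨x, hx, not_not.mpr hxA⟩⟩

theorem main_bound {V E : Type} [Fintype V] [DecidableEq V] [Fintype E] [Nonempty V]
    (ends : E → Sym2 V)
    (F : Finset E) (k : ℕ) (hk : numComponents ends F = k) :
    (((Finset.univ.filter (fun A : Finset V =>
          A.Nonempty ∧ Aᶜ.Nonempty ∧ cutEdges ends A ⊆ F)).image
            (fun A => ({A, Aᶜ} : Finset (Finset V)))).card ≤ 2 ^ (k - 1) - 1) := by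
  classical
  obtain ⟨v₀⟩ := ‹Nonempty V›
  set G := survGraph ends F with hG
  haveI : Finite G.ConnectedComponent := Quot.finite _
  haveI : Fintype G.ConnectedComponent := Fintype.ofFinite _
  have hkcard : Fintype.card G.ConnectedComponent = k := by
    rw [← hk]; unfold numComponents; rw [Nat.card_eq_fintype_card]
  set c₀ := G.connectedComponentMk v₀ with hc₀
  set S := Finset.univ.filter (fun A : Finset V =>
      A.Nonempty ∧ Aᶜ.Nonempty ∧ cutEdges ends A ⊆ F) with hS
  set S' := S.filter (fun A => v₀ ∉ A) with hS'
  -- the image over S equals the image over S'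
  have himg : S.image (fun A => ({A, Aᶜ} : Finset (Finset V)))
      = S'.image (fun A => ({A, Aᶜ} : Finset (Finset V))) := by
    apply Finset.Subset.antisymm
    · intro P hP
      obtain ⟨A, hA, hPA⟩ := Finset.mem_image.mp hP
      by_cases hv : v₀ ∈ A
      · refine Finset.mem_image.mpr ⟨Aᶜ, ?_, ?_⟩
        · rw [hS', Finset.mem_filter]
          rw [hS, Finset.mem_filter] at hA
          obtain ⟨_, h1, h2, h3⟩ := hA
          refine ⟨Finset.mem_filter.mpr ⟨Finset.mem_univ _, h2, by rwa [compl_compl], ?_⟩,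
            by simp [hv]⟩
          intro e he
          apply h3
          rw [cutEdges, Finset.mem_filter] at he ⊢
          exact ⟨he.1, (crosses_compl ends A e).mp he.2⟩
        · rw [← hPA, compl_compl, Finset.pair_comm]
      · exact Finset.mem_image.mpr ⟨A, Finset.mem_filter.mpr ⟨hA, hv⟩, hPA⟩
    · exact Finset.image_subset_image (Finset.filter_subset _ _)
  rw [himg]
  calc (S'.image (fun A => ({A, Aᶜ} : Finset (Finset V)))).card
      ≤ S'.card := Finset.card_image_le
    _ ≤ ((Finset.univ.erase c₀).powerset.erase ∅).card := by
        apply Finset.card_le_card_of_injOn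
          (fun A => Finset.univ.filter (fun c : G.ConnectedComponent => c.out ∈ A))
        · intro A hA
          rw [Finset.mem_coe, hS', Finset.mem_filter, hS, Finset.mem_filter] at hA
          obtain ⟨⟨_, hne, _, hcut⟩, hv₀⟩ := hA
          have hmemiff : ∀ v : V, v ∈ A ↔ (G.connectedComponentMk v).out ∈ A := by
            intro v
            apply mem_iff_of_reachable ends F A hcut
            have : G.connectedComponentMk ((G.connectedComponentMk v).out)
                = G.connectedComponentMk v := Quot.out_eq _
            exact (SimpleGraph.ConnectedComponent.eq.mp this).symm
          rw [Finset.mem_coe, Finset.mem_erase]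
          constructor
          · obtain ⟨a, ha⟩ := hne
            intro h0
            have : G.connectedComponentMk a ∈ (∅ : Finset G.ConnectedComponent) := by
              rw [← h0, Finset.mem_filter]
              exact ⟨Finset.mem_univ _, (hmemiff a).mp ha⟩
            simp at this
          · rw [Finset.mem_powerset]
            intro c hc
            rw [Finset.mem_filter] at hc
            rw [Finset.mem_erase]
            refine ⟨?_, Finset.mem_univ _⟩
            rintro rfl
            exact hv₀ ((hmemiff v₀).mpr hc.2)
        · intro A hA B hB hAB
          simp only [hS', hS, Finset.mem_coe, Finset.mem_filter] at hA hB
          have hmemiffA : ∀ v : V, v ∈ A ↔ (G.connectedComponentMk v).out ∈ A := by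
            intro v
            apply mem_iff_of_reachable ends F A hA.1.2.2.2
            exact (SimpleGraph.ConnectedComponent.eq.mp (Quot.out_eq _)).symm
          have hmemiffB : ∀ v : V, v ∈ B ↔ (G.connectedComponentMk v).out ∈ B := by
            intro v
            apply mem_iff_of_reachable ends F B hB.1.2.2.2
            exact (SimpleGraph.ConnectedComponent.eq.mp (Quot.out_eq _)).symm
          ext v
          rw [hmemiffA v, hmemiffB v]
          have := Finset.ext_iff.mp hAB (G.connectedComponentMk v)
          simpa using this
    _ ≤ 2 ^ (k - 1) - 1 := by
        have h1 : (∅ : Finset G.ConnectedComponent) ∈ (Finset.univ.erase c₀).powerset := by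
          simp
        rw [Finset.card_erase_of_mem h1, Finset.card_powerset, Finset.card_erase_of_mem
          (Finset.mem_univ _), Finset.card_univ, hkcard]

theorem stmt15 {V E : Type} [Fintype V] [DecidableEq V] [Fintype E] [Nonempty V]
    (ends : E → Sym2 V) (hnd : ∀ e, ¬ (ends e).IsDiag)
    (F : Finset E) (k : ℕ) (hk : numComponents ends F = k) :
    (((Finset.univ.filter (fun A : Finset V =>
          A.Nonempty ∧ Aᶜ.Nonempty ∧ cutEdges ends A ⊆ F)).image
            (fun A => ({A, Aᶜ} : Finset (Finset V)))).card ≤ 2 ^ (k - 1) - 1) ∧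
      ∀ u : ℕ,
        u ≤ ((Finset.univ.filter (fun A : Finset V =>
            A.Nonempty ∧ Aᶜ.Nonempty ∧ cutEdges ends A ⊆ F)).image
              (fun A => ({A, Aᶜ} : Finset (Finset V)))).card →
          (⌈Real.logb 2 ((u : ℝ) + 1) + 1⌉ : ℤ) ≤ (numComponents ends F : ℤ) := by
  have hbound := main_bound ends F k hk
  refine ⟨hbound, fun u hu => ?_⟩
  have hk1 : 1 ≤ k := by
    rw [← hk]
    unfold numComponents
    haveI : Finite (survGraph ends F).ConnectedComponent := Quot.finite _
    haveI : Nonempty (survGraph ends F).ConnectedComponent :=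
      ⟨(survGraph ends F).connectedComponentMk (Classical.arbitrary V)⟩
    exact Nat.one_le_iff_ne_zero.mpr Nat.card_pos.ne'
  have hu2 : u + 1 ≤ 2 ^ (k - 1) := by
    have h2 : 1 ≤ 2 ^ (k - 1) := Nat.one_le_two_pow
    omega
  rw [hk]
  have hlog : Real.logb 2 ((u : ℝ) + 1) ≤ ((k - 1 : ℕ) : ℝ) := by
    rw [Real.logb_le_iff_le_rpow one_lt_two (by positivity), Real.rpow_natCast]
    exact_mod_cast hu2
  have hcast : ((k - 1 : ℕ) : ℝ) = (k : ℝ) - 1 := by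
    push_cast [Nat.cast_sub hk1]; ring
  rw [Int.ceil_le]
  push_cast
  rw [hcast] at hlog
  linarith
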